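/- Let p be real with 7/8 ≤ p ≤ 1 and define c_k = 2(1−p)/(2p−1) − C_k(p). Then for every k ≥ 2, c_k ≥ 0. -/
import Mathlib

lemma fitch_lemB (q x : ℝ) (hq1 : 3/4 ≤ q) (hq2 : q ≤ 1) (hx : 0 ≤ x) (hm : q*x ≤ 1-q) :
    0 ≤ -3*q+10*q^2-8*q^3-2*q^4-4*q^4*x-2*q^4*x^2+3*q^5+4*q^5*x
        +2*q^5*x^2+4*q^5*x^3+3*q^5*x^4 := by
  have hq0 : (0:ℝ) < q := by linarith
  have hm0 : 0 ≤ 1 - q - q*x := by linarith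
  have hm1 : 1 - q - q*x ≤ 1 - q := by
    have := mul_nonneg hq0.le hx; linarith
  have hH : 0 ≤ -12+28*q-16*q^2+(1-q-q*x)*(18-26*q+8*q^2)
      +(1-q-q*x)^2*(-12+8*q)+3*(1-q-q*x)^3 := by
    nlinarith [mul_nonneg hm0 (sub_nonneg.2 hm1), mul_nonneg (mul_nonneg hm0 hm0) hm0,
      mul_nonneg hm0 (sub_nonneg.2 hq2), mul_nonneg (mul_nonneg hm0 hm0) (sub_nonneg.2 hq2)]
  have h2 := mul_nonneg (mul_nonneg hq0.le hm0) hH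
  nlinarith [h2]

lemma fitch_lemA (q x : ℝ) (hq1 : 3/4 ≤ q) (hq2 : q ≤ 1) (hx : 0 ≤ x) (hm : q*x ≤ 1-q) :
    q*(1-2*x^2+3*x^4) - 2*(1-q) ≤ q^3*(1+x)^2*(1-x)^2 := by
  have hq0 : (0:ℝ) < q := by linarith
  have hx3 : x ≤ 1/3 := by
    have := mul_nonneg (sub_nonneg.2 hq1) hx; linarith
  nlinarith [mul_nonneg hx (sub_nonneg.2 hx3), sq_nonneg (q*x), sq_nonneg x,
    mul_nonneg hx hx, sq_nonneg (1-q), mul_nonneg (sub_nonneg.2 hm) hx,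
    mul_nonneg (mul_nonneg (sub_nonneg.2 hm) hx) hx,
    mul_nonneg (sub_nonneg.2 hq2) (sub_nonneg.2 hq1)]

set_option maxHeartbeats 1000000 in
lemma fitch_inv (q : ℝ) (C D : ℕ → ℝ)
    (hC0 : C 0 = 0) (hD0 : D 0 = 1)
    (hC : ∀ n, 2 * C (n + 1) = 1 - 2 * C n + 3 * (C n) ^ 2 - q ^ 2 * (D n) ^ 2)
    (hD : ∀ n, D (n + 1) = q * (1 + C n) * D n)
    (hq1 : 3/4 ≤ q) (hq2 : q ≤ 1) :
    ∀ n, 0 ≤ C n ∧ q * C n ≤ 1 - q ∧ 0 ≤ D n ∧ q * D n ≤ 1 - C n ∧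
      q * (1 - 2 * C n + 3 * (C n)^2) - 2*(1-q) ≤ q^3 * (D n)^2 := by
  have hq0 : (0:ℝ) < q := by linarith
  intro n
  induction n with
  | zero =>
    rw [hC0, hD0]
    refine ⟨le_refl 0, by linarith, zero_le_one, by linarith, ?_⟩
    nlinarith only [sq_nonneg (q-1), hq0, hq2]
  | succ n ih =>
    obtain ⟨i1, i2, i3, i4, i5⟩ := ih
    have e1 := hC n
    have e2 := hD n
    have hqD : 0 ≤ q * D n := mul_nonneg hq0.le i3
    have t2 : (q * D n)^2 ≤ (1 - C n)^2 := by
      have h := mul_nonneg (by linarith : (0:ℝ) ≤ 1 - C n - q * D n)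
        (by linarith : (0:ℝ) ≤ 1 - C n + q * D n)
      nlinarith only [h]
    have s1 : (C n)^2 ≤ C (n+1) := by nlinarith only [e1, t2]
    have s1' : 0 ≤ C (n+1) := le_trans (sq_nonneg _) s1
    have e1q : q*(2*C (n+1)) = q*(1 - 2*C n + 3*(C n)^2 - q^2*(D n)^2) := by rw [e1]
    have s2 : q * C (n+1) ≤ 1 - q := by nlinarith only [e1q, i5]
    have h1C : (0:ℝ) ≤ 1 + C n := by linarith
    have s3 : 0 ≤ D (n+1) := by
      rw [e2]; exact mul_nonneg (mul_nonneg hq0.le h1C) i3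
    have h4a : 0 ≤ ((1 - C n) - q * D n) * ((1 + 3 * C n) - q * D n) :=
      mul_nonneg (by linarith) (by linarith)
    have h4b : 0 ≤ (1 - q) * ((1 + C n) * (q * D n)) :=
      mul_nonneg (by linarith) (mul_nonneg h1C hqD)
    have s4 : q * D (n+1) ≤ 1 - C (n+1) := by
      rw [e2]; nlinarith only [h4a, h4b, e1]
    refine ⟨s1', s2, s3, s4, ?_⟩
    -- main invariant
    have hA := fitch_lemA q (C n) hq1 hq2 i1 i2
    have hB := fitch_lemB q (C n) hq1 hq2 i1 i2
    have hDsq : (D (n+1))^2 = q^2 * (1 + C n)^2 * (D n)^2 := by rw [e2]; ring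
    have hu : q^2*(D n)^2 = (1 - 2*C n + 3*(C n)^2) - 2*(C (n+1)) := by
      linarith only [e1]
    have hfin : q^3*(D (n+1))^2
        = q^3*(1+C n)^2*((1 - 2*C n + 3*(C n)^2) - 2*(C (n+1))) := by
      linear_combination q^3 * hDsq + q^3*(1+C n)^2 * hu
    have hx0 : 0 ≤ q * C (n+1) - q * (C n)^2 := by
      have h := mul_nonneg hq0.le (sub_nonneg.2 s1)
      nlinarith only [h]
    have hx1 : 0 ≤ (1 - q) - q * C (n+1) := by linarith
    have hC3 : C n ≤ 1/3 := by
      have h := mul_nonneg (sub_nonneg.2 hq1) i1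
      nlinarith only [h, i2, hq1]
    rcases lt_or_eq_of_le hq2 with hqlt | hqeq
    · -- q < 1
      have hx2 : 0 < (1 - q) - q * (C n)^2 := by
        have h1 := mul_nonneg (by linarith : (0:ℝ) ≤ 1 - q - q * C n) i1
        have h2 := mul_pos (by linarith : (0:ℝ) < 1 - q)
          (by linarith : (0:ℝ) < 1 - C n)
        nlinarith only [h1, h2, i1, i2, hC3]
      have hF0 : 0 ≤ q^3*(1+C n)^2*(1-C n)^2 - q*(1-2*(C n)^2+3*(C n)^4) + 2*(1-q) := by
        linarith only [hA]
      have key : (q^3*(1+C n)^2*((1-2*C n+3*(C n)^2) - 2*(C (n+1)))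
              - q*(1 - 2*(C (n+1)) + 3*(C (n+1))^2) + 2*(1-q))
            * (q^2 * (2*(1-q) - 2*q*(C n)^2) * q^2)
          = q^2 * (2*(1-q) - 2*q*(C (n+1))) *
              (q^2 * (q^3*(1+C n)^2*(1-C n)^2 - q*(1-2*(C n)^2+3*(C n)^4) + 2*(1-q)))
            + (2*q*(C (n+1)) - 2*q*(C n)^2) * (q^2 *
                (-3*q+10*q^2-8*q^3-2*q^4-4*q^4*(C n)-2*q^4*(C n)^2+3*q^5+4*q^5*(C n)
                  +2*q^5*(C n)^2+4*q^5*(C n)^3+3*q^5*(C n)^4))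
            + (3/4) * q^3 * (2*q*(C (n+1)) - 2*q*(C n)^2) * (2*(1-q) - 2*q*(C (n+1)))
                * (2*(1-q) - 2*q*(C n)^2) := by ring
      have hT1 : 0 ≤ q^2 * (2*(1-q) - 2*q*(C (n+1))) *
          (q^2 * (q^3*(1+C n)^2*(1-C n)^2 - q*(1-2*(C n)^2+3*(C n)^4) + 2*(1-q))) :=
        mul_nonneg (mul_nonneg (sq_nonneg q) (by linarith)) (mul_nonneg (sq_nonneg q) hF0)
      have hT2 : 0 ≤ (2*q*(C (n+1)) - 2*q*(C n)^2) * (q^2 *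
            (-3*q+10*q^2-8*q^3-2*q^4-4*q^4*(C n)-2*q^4*(C n)^2+3*q^5+4*q^5*(C n)
              +2*q^5*(C n)^2+4*q^5*(C n)^3+3*q^5*(C n)^4)) :=
        mul_nonneg (by linarith) (mul_nonneg (sq_nonneg q) hB)
      have hT3 : 0 ≤ (3/4) * q^3 * (2*q*(C (n+1)) - 2*q*(C n)^2) * (2*(1-q) - 2*q*(C (n+1)))
                * (2*(1-q) - 2*q*(C n)^2) := by
        have h3 : (0:ℝ) ≤ (3/4) * q^3 := by positivity
        exact mul_nonneg (mul_nonneg (mul_nonneg h3 (by linarith)) (by linarith)) (by linarith)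
      have hFs : 0 ≤ (q^2 * (2*(1-q) - 2*q*(C n)^2) * q^2)
            * (q^3*(1+C n)^2*((1-2*C n+3*(C n)^2) - 2*(C (n+1)))
              - q*(1 - 2*(C (n+1)) + 3*(C (n+1))^2) + 2*(1-q)) := by
        rw [mul_comm, key]
        linarith only [hT1, hT2, hT3]
      have hpos : 0 < q^2 * (2*(1-q) - 2*q*(C n)^2) * q^2 := by
        have h : (0:ℝ) < 2*(1-q) - 2*q*(C n)^2 := by linarith
        positivity
      have hFz : 0 ≤ q^3*(1+C n)^2*((1-2*C n+3*(C n)^2) - 2*(C (n+1)))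
              - q*(1 - 2*(C (n+1)) + 3*(C (n+1))^2) + 2*(1-q) :=
        nonneg_of_mul_nonneg_right hFs hpos
      linarith only [hFz, hfin]
    · -- q = 1
      subst hqeq
      have hc0 : C n = 0 := le_antisymm (by linarith only [i2]) i1
      have hC'le : C (n+1) ≤ 0 := by
        rw [hc0] at hu
        nlinarith only [hu, i5, hc0]
      have hC'0 : C (n+1) = 0 := le_antisymm hC'le s1'
      rw [hc0] at hfin
      rw [hC'0] at hfin ⊢
      nlinarith only [hfin]

theorem fitch_c_nonneg
    (p : ℝ) (C D : ℕ → ℝ)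
    (hC0 : C 0 = 0) (hD0 : D 0 = 1)
    (hC : ∀ n, 2 * C (n + 1) =
        1 - 2 * C n + 3 * (C n) ^ 2 - (2 * p - 1) ^ 2 * (D n) ^ 2)
    (hD : ∀ n, D (n + 1) = (2 * p - 1) * (1 + C n) * D n)
    (hp1 : 7 / 8 ≤ p) (hp2 : p ≤ 1)
    (k : ℕ) (hk : 2 ≤ k) :
    0 ≤ 2 * (1 - p) / (2 * p - 1) - C k := by
  have hq1 : 3/4 ≤ 2*p - 1 := by linarith
  have hq2 : 2*p - 1 ≤ 1 := by linarith
  have hinv := (fitch_inv (2*p-1) C D hC0 hD0 (by intro n; simpa using hC n)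
    (by intro n; simpa using hD n) hq1 hq2 k).2.1
  have h2p : (0:ℝ) < 2*p - 1 := by linarith
  rw [sub_nonneg, le_div_iff₀ h2p]
  nlinarith only [hinv]
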